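/- For fixed forgetting time τ_f > 0 and fixed mass m > 0, the expectation value E(ρ) = (4m²/(3τ_f)) ∫₀^∞ cosh(ξ)·sinh(ξ)·exp(−ρπτ_f⁴·g(ξ)) dξ tends to 0 as the sprinkling density ρ tends to infinity. (Lemma 3.1: if the discreteness scale d_pl → 0 with the forgetting time fixed, the momentum diffusion expectation ⟨Δp Δp /(2Δτ)⟩ tends to 0.) -/

import Mathlib

open MeasureTheory Filter Real

/-- The function `g(ξ) = sinh(2ξ)/4 − ξ/2` appearing in the swerves expectation value. -/
noncomputable def swerveG (ξ : ℝ) : ℝ := Real.sinh (2 * ξ) / 4 - ξ / 2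

lemma swerveG_pos {ξ : ℝ} (hξ : 0 < ξ) : 0 < swerveG ξ := by
  have h : 2 * ξ < Real.sinh (2 * ξ) := Real.self_lt_sinh_iff.2 (by linarith)
  unfold swerveG; linarith

lemma swerveG_lb {ξ : ℝ} (hξ : 0 ≤ ξ) : ξ^2/8 - ξ/4 ≤ swerveG ξ := by
  have h1 : (1 + ξ) ≤ Real.exp ξ := by
    have := Real.add_one_le_exp ξ; linarith
  have h2 : Real.exp (2*ξ) = Real.exp ξ * Real.exp ξ := by
    rw [two_mul, Real.exp_add]
  have h3 : Real.exp (-(2*ξ)) ≤ 1 := by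
    rw [Real.exp_le_one_iff]; linarith
  have h4 : Real.sinh (2*ξ) = (Real.exp (2*ξ) - Real.exp (-(2*ξ))) / 2 := Real.sinh_eq _
  unfold swerveG
  rw [h4]
  nlinarith [sq_nonneg (1 + ξ)]

lemma coshsinh_ub (ξ : ℝ) : Real.cosh ξ * Real.sinh ξ ≤ Real.exp (2*ξ) / 4 := by
  have h2 : Real.exp (2*ξ) = Real.exp ξ * Real.exp ξ := by
    rw [two_mul, Real.exp_add]
  have h3 : 0 < Real.exp (-ξ) := Real.exp_pos _
  have h4 : Real.sinh ξ = (Real.exp ξ - Real.exp (-ξ)) / 2 := Real.sinh_eq _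
  have h5 : Real.cosh ξ = (Real.exp ξ + Real.exp (-ξ)) / 2 := Real.cosh_eq _
  rw [h4, h5, h2]
  nlinarith [mul_pos h3 h3]

/-- **Lemma 3.1** (swerves model): for fixed forgetting time `τf > 0` and mass `m > 0`, the
expectation value `E(ρ) = (4m²/(3τf)) ∫₀^∞ cosh ξ · sinh ξ · exp(−ρπτf⁴ g(ξ)) dξ` tends to `0`
as the sprinkling density `ρ → ∞`. -/
theorem swerves_expectation_tendsto_zero (τf m : ℝ) (hτf : 0 < τf) (hm : 0 < m) :
    Tendsto (fun ρ : ℝ =>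
        (4 * m ^ 2 / (3 * τf)) *
          ∫ ξ in Set.Ioi (0 : ℝ),
            Real.cosh ξ * Real.sinh ξ * Real.exp (-(ρ * π * τf ^ 4 * swerveG ξ)))
      atTop (nhds 0) := by
  have hπ : (0:ℝ) < π := Real.pi_pos
  set c : ℝ := π * τf ^ 4 with hc_def
  have hc : 0 < c := by positivity
  set B : ℝ := 2 * (3 + c/4)^2 / c with hB_def
  have hBc : B * c = 2 * (3 + c/4)^2 := by
    rw [hB_def]; field_simp
  set K : ℝ := (1/4) * Real.exp B with hK_def
  -- dominating function
  set bound : ℝ → ℝ := fun ξ => K * Real.exp (-ξ) with hbound_def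
  have hbound_int : Integrable bound (volume.restrict (Set.Ioi (0:ℝ))) := by
    have h := (exp_neg_integrableOn_Ioi (0:ℝ) (one_pos)).const_mul K
    simpa only [neg_one_mul] using h
  -- measurability
  have hmeas : ∀ ρ : ℝ, AEStronglyMeasurable
      (fun ξ => Real.cosh ξ * Real.sinh ξ * Real.exp (-(ρ * π * τf ^ 4 * swerveG ξ)))
      (volume.restrict (Set.Ioi (0:ℝ))) := by
    intro ρ
    apply Continuous.aestronglyMeasurable
    have hg : Continuous swerveG := by
      unfold swerveG; fun_prop
    fun_prop
  -- the a.e. bound for ρ ≥ 1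
  have h_bound : ∀ᶠ ρ : ℝ in atTop, ∀ᵐ ξ ∂(volume.restrict (Set.Ioi (0:ℝ))),
      ‖Real.cosh ξ * Real.sinh ξ * Real.exp (-(ρ * π * τf ^ 4 * swerveG ξ))‖ ≤ bound ξ := by
    filter_upwards [eventually_ge_atTop (1:ℝ)] with ρ hρ
    refine (ae_restrict_iff' measurableSet_Ioi).2 (Filter.Eventually.of_forall ?_)
    intro ξ hξ
    have hξ0 : 0 < ξ := hξ
    have hg0 : 0 < swerveG ξ := swerveG_pos hξ0
    have hch : 0 < Real.cosh ξ := Real.cosh_pos ξ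
    have hsh : 0 < Real.sinh ξ := Real.sinh_pos_iff.2 hξ0
    have hexp : 0 < Real.exp (-(ρ * π * τf ^ 4 * swerveG ξ)) := Real.exp_pos _
    rw [Real.norm_eq_abs, abs_of_pos (by positivity)]
    have h1 : Real.exp (-(ρ * π * τf ^ 4 * swerveG ξ)) ≤ Real.exp (-(c * swerveG ξ)) := by
      apply Real.exp_le_exp.2
      have hk : 0 < π * τf ^ 4 := by positivity
      have : c * swerveG ξ ≤ ρ * π * τf ^ 4 * swerveG ξ := by
        rw [hc_def]
        nlinarith [mul_pos hk hg0]
      linarith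
    have h2 : Real.cosh ξ * Real.sinh ξ ≤ Real.exp (2*ξ) / 4 := coshsinh_ub ξ
    have h3 : Real.exp (2*ξ) / 4 * Real.exp (-(c * swerveG ξ)) ≤ bound ξ := by
      rw [hbound_def]
      simp only [hK_def]
      rw [div_mul_eq_mul_div, ← Real.exp_add]
      rw [mul_assoc (1/4 : ℝ), ← Real.exp_add]
      rw [div_le_iff₀ (by norm_num : (0:ℝ) < 4)]
      rw [mul_comm _ (4:ℝ), ← mul_assoc]
      norm_num
      have hlb : ξ^2/8 - ξ/4 ≤ swerveG ξ := swerveG_lb (le_of_lt hξ0)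
      have hcg : c * (ξ^2/8 - ξ/4) ≤ c * swerveG ξ := by nlinarith
      nlinarith [sq_nonneg (c * ξ - 4 * (3 + c/4)), hBc, hc, hcg]
    calc Real.cosh ξ * Real.sinh ξ * Real.exp (-(ρ * π * τf ^ 4 * swerveG ξ))
        ≤ Real.exp (2*ξ) / 4 * Real.exp (-(c * swerveG ξ)) := by
          apply mul_le_mul h2 h1 (le_of_lt hexp) (by positivity)
      _ ≤ bound ξ := h3
  -- pointwise limit
  have h_lim : ∀ᵐ ξ ∂(volume.restrict (Set.Ioi (0:ℝ))),
      Tendsto (fun ρ : ℝ => Real.cosh ξ * Real.sinh ξ * Real.exp (-(ρ * π * τf ^ 4 * swerveG ξ)))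
        atTop (nhds 0) := by
    refine (ae_restrict_iff' measurableSet_Ioi).2 (Filter.Eventually.of_forall ?_)
    intro ξ hξ
    have hξ0 : 0 < ξ := hξ
    have hg0 : 0 < swerveG ξ := swerveG_pos hξ0
    have hk : 0 < π * τf ^ 4 * swerveG ξ := by positivity
    have h1 : Tendsto (fun ρ : ℝ => -(ρ * π * τf ^ 4 * swerveG ξ)) atTop atBot := by
      have h2 : Tendsto (fun ρ : ℝ => ρ * (π * τf ^ 4 * swerveG ξ)) atTop atTop :=
        Tendsto.atTop_mul_const hk tendsto_id
      have h3 : Tendsto (fun ρ : ℝ => -(ρ * (π * τf ^ 4 * swerveG ξ))) atTop atBot :=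
        tendsto_neg_atBot_iff.2 h2
      convert h3 using 2 with ρ
      ring
    have h4 : Tendsto (fun ρ : ℝ => Real.exp (-(ρ * π * τf ^ 4 * swerveG ξ))) atTop (nhds 0) :=
      Real.tendsto_exp_atBot.comp h1
    have h5 := h4.const_mul (Real.cosh ξ * Real.sinh ξ)
    simpa [mul_assoc] using h5
  have hmain := MeasureTheory.tendsto_integral_filter_of_dominated_convergence
      (μ := volume.restrict (Set.Ioi (0:ℝ)))
      (F := fun ρ : ℝ => fun ξ => Real.cosh ξ * Real.sinh ξ * Real.exp (-(ρ * π * τf ^ 4 * swerveG ξ)))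
      (f := fun _ => (0:ℝ)) bound
      (Filter.Eventually.of_forall hmeas) h_bound hbound_int h_lim
  simp only [integral_zero] at hmain
  have := hmain.const_mul (4 * m ^ 2 / (3 * τf))
  simpa using this
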